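/- For every continuous β-periodic function u : ℝ → ℝ, the function v(τ) = ∫₀^β F(τ − σ) u(σ) dσ is twice continuously differentiable, β-periodic, and satisfies −v″(τ) + ε² v(τ) = u(τ) for all τ ∈ ℝ. In other words, convolution with F on the circle of length β inverts the operator −∂τ² + ε² on β-periodic functions. -/

import Mathlib

open MeasureTheory intervalIntegral

/-- for every continuous β-periodic `u`, the function
`v τ = ∫₀^β F(τ − σ) u σ dσ` is twice continuously differentiable, β-periodic, and satisfies
`−v″ + ε² v = u` everywhere: convolution with `F` on the circle of length `β` inverts
`−∂τ² + ε²` on β-periodic functions. -/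
theorem stmt4 (β ε : ℝ) (hβ : 0 < β) (hε : 0 < ε) (F : ℝ → ℝ)
    (hper : Function.Periodic F β)
    (hF : ∀ τ ∈ Set.Ico (0:ℝ) β,
      F τ = (Real.exp (-τ * ε) + Real.exp ((τ - β) * ε)) / (2 * ε * (1 - Real.exp (-β * ε))))
    (u : ℝ → ℝ) (hu : Continuous u) (huper : Function.Periodic u β)
    (v : ℝ → ℝ) (hv : ∀ τ : ℝ, v τ = ∫ σ in (0:ℝ)..β, F (τ - σ) * u σ) :
    ContDiff ℝ 2 v ∧ Function.Periodic v β ∧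
    ∀ τ : ℝ, -(deriv (deriv v) τ) + ε ^ 2 * v τ = u τ := by
  have hεne : ε ≠ 0 := ne_of_gt hε
  have hb1 : (1:ℝ) < Real.exp (β * ε) := by
    rw [show (1:ℝ) = Real.exp 0 by simp]
    exact Real.exp_lt_exp.2 (by positivity)
  have hane : ∀ x : ℝ, Real.exp x ≠ 0 := fun x => (Real.exp_pos x).ne'
  have hbinv : (Real.exp (β * ε))⁻¹ < 1 := by
    rw [inv_lt_one_iff₀]; right; exact hb1
  have hbsub : (1:ℝ) - (Real.exp (β * ε))⁻¹ ≠ 0 := by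
    intro h; nlinarith
  have rβ : Real.exp (-β * ε) = (Real.exp (β * ε))⁻¹ := by
    rw [show -β * ε = -(β * ε) by ring, Real.exp_neg]
  have hus : ∀ σ : ℝ, u (σ - β) = u σ := fun σ => huper.sub_eq σ
  set c : ℝ := (2 * ε * (1 - Real.exp (-β * ε)))⁻¹ with hcdef
  set G : ℝ → ℝ := fun t => (Real.exp (-t * ε) + Real.exp ((t - β) * ε)) * c with hGdef
  have hGc : Continuous G := by fun_prop
  have hFG : ∀ t ∈ Set.Icc (0:ℝ) β, F t = G t := by
    intro t ht
    rcases lt_or_eq_of_le ht.2 with h | h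
    · rw [hF t ⟨ht.1, h⟩, hGdef, div_eq_mul_inv]
    · subst h
      have h0 : F t = F 0 := by simpa using hper 0
      rw [h0, hF 0 ⟨le_refl _, hβ⟩, hGdef, div_eq_mul_inv]
      simp only
      rw [show -(0:ℝ) * ε = 0 by ring, show ((0:ℝ) - t) * ε = -t * ε by ring,
        show (t - t) * ε = 0 by ring, Real.exp_zero]
      ring
  set g1 : ℝ → ℝ := fun σ => Real.exp (σ * ε) * u σ with hg1def
  set g2 : ℝ → ℝ := fun σ => Real.exp (-σ * ε) * u σ with hg2def
  have hg1c : Continuous g1 := by fun_prop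
  have hg2c : Continuous g2 := by fun_prop
  set A : ℝ → ℝ := fun τ => ∫ σ in (τ - β)..τ, g1 σ with hAdef
  set B : ℝ → ℝ := fun τ => ∫ σ in (τ - β)..τ, g2 σ with hBdef
  set V : ℝ → ℝ := fun τ => (Real.exp (-τ * ε) * A τ + Real.exp ((τ - β) * ε) * B τ) * c
    with hVdef
  set V1 : ℝ → ℝ := fun τ =>
      ε * (Real.exp ((τ - β) * ε) * B τ - Real.exp (-τ * ε) * A τ) * c with hV1def
  -- FTC helper
  have FTC : ∀ (g : ℝ → ℝ), Continuous g → ∀ τ : ℝ,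
      HasDerivAt (fun x => ∫ σ in (0:ℝ)..x, g σ) (g τ) τ := by
    intro g hg τ
    exact intervalIntegral.integral_hasDerivAt_right (hg.intervalIntegrable _ _)
      (hg.stronglyMeasurableAtFilter _ _) hg.continuousAt
  have hsplit : ∀ (g : ℝ → ℝ), Continuous g → ∀ x : ℝ,
      (∫ σ in (x - β)..x, g σ) = (∫ σ in (0:ℝ)..x, g σ) - ∫ σ in (0:ℝ)..(x - β), g σ :=
    fun g hg x =>
      (integral_interval_sub_left (hg.intervalIntegrable _ _) (hg.intervalIntegrable _ _)).symm
  have hAder : ∀ τ : ℝ, HasDerivAt A ((Real.exp (τ * ε) - Real.exp ((τ - β) * ε)) * u τ) τ := by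
    intro τ
    have hA_eq : A = fun x => (∫ σ in (0:ℝ)..x, g1 σ) - ∫ σ in (0:ℝ)..(x - β), g1 σ := by
      funext x; rw [hAdef]; exact hsplit g1 hg1c x
    have h2 : HasDerivAt (fun x : ℝ => ∫ σ in (0:ℝ)..(x - β), g1 σ) (g1 (τ - β)) τ := by
      have := (FTC g1 hg1c (τ - β)).comp τ ((hasDerivAt_id τ).sub_const β)
      simpa [Function.comp_def] using this
    have h3 := (FTC g1 hg1c τ).sub h2
    rw [hA_eq]
    refine h3.congr_deriv (Eq.symm ?_)
    simp only [hg1def]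
    rw [hus τ]
    ring
  have hBder : ∀ τ : ℝ,
      HasDerivAt B ((Real.exp (-τ * ε) - Real.exp (-(τ - β) * ε)) * u τ) τ := by
    intro τ
    have hB_eq : B = fun x => (∫ σ in (0:ℝ)..x, g2 σ) - ∫ σ in (0:ℝ)..(x - β), g2 σ := by
      funext x; rw [hBdef]; exact hsplit g2 hg2c x
    have h2 : HasDerivAt (fun x : ℝ => ∫ σ in (0:ℝ)..(x - β), g2 σ) (g2 (τ - β)) τ := by
      have := (FTC g2 hg2c (τ - β)).comp τ ((hasDerivAt_id τ).sub_const β)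
      simpa [Function.comp_def] using this
    have h3 := (FTC g2 hg2c τ).sub h2
    rw [hB_eq]
    refine h3.congr_deriv (Eq.symm ?_)
    simp only [hg2def]
    rw [hus τ]
    ring
  have hexp1 : ∀ τ : ℝ, HasDerivAt (fun t : ℝ => Real.exp (-t * ε)) (-ε * Real.exp (-τ * ε)) τ := by
    intro τ
    have h : HasDerivAt (fun t : ℝ => -t * ε) (-ε) τ := by
      simpa using ((hasDerivAt_id τ).neg.mul_const ε)
    simpa [mul_comm] using h.exp
  have hexp2 : ∀ τ : ℝ,
      HasDerivAt (fun t : ℝ => Real.exp ((t - β) * ε)) (ε * Real.exp ((τ - β) * ε)) τ := by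
    intro τ
    have h : HasDerivAt (fun t : ℝ => (t - β) * ε) ε τ := by
      simpa using ((hasDerivAt_id τ).sub_const β).mul_const ε
    simpa [mul_comm] using h.exp
  have ra : ∀ τ : ℝ, Real.exp (-τ * ε) = (Real.exp (τ * ε))⁻¹ := by
    intro τ; rw [show -τ * ε = -(τ * ε) by ring, Real.exp_neg]
  have rb : ∀ τ : ℝ, Real.exp ((τ - β) * ε) = Real.exp (τ * ε) / Real.exp (β * ε) := by
    intro τ; rw [show (τ - β) * ε = τ * ε - β * ε by ring, Real.exp_sub]
  have rc : ∀ τ : ℝ, Real.exp (-(τ - β) * ε) = Real.exp (β * ε) / Real.exp (τ * ε) := by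
    intro τ; rw [show -(τ - β) * ε = β * ε - τ * ε by ring, Real.exp_sub]
  have hVder : ∀ τ : ℝ, HasDerivAt V (V1 τ) τ := by
    intro τ
    have h := (((hexp1 τ).mul (hAder τ)).add ((hexp2 τ).mul (hBder τ))).mul_const c
    rw [hVdef, hV1def]
    refine h.congr_deriv (Eq.symm ?_)
    simp only
    rw [ra τ, rb τ, rc τ]
    field_simp
    ring
  have hc1 : 2 * ε * (1 - (Real.exp (β * ε))⁻¹) * c = 1 := by
    rw [hcdef, ← rβ]
    refine mul_inv_cancel₀ (mul_ne_zero (by positivity) ?_)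
    rw [rβ]; exact hbsub
  have hu' : ∀ τ : ℝ, u τ = 2 * ε * (1 - (Real.exp (β * ε))⁻¹) * c * u τ := by
    intro τ; rw [hc1, one_mul]
  have hV1der : ∀ τ : ℝ, HasDerivAt V1 (ε ^ 2 * V τ - u τ) τ := by
    intro τ
    have h := ((((hexp2 τ).mul (hBder τ)).sub ((hexp1 τ).mul (hAder τ))).const_mul ε).mul_const c
    rw [hV1def]
    refine h.congr_deriv (Eq.symm ?_)
    simp only [hVdef]
    rw [ra τ, rb τ, rc τ]
    conv_lhs => rw [hu' τ]
    field_simp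
    ring
  -- periodicity of v
  have hvper : Function.Periodic v β := by
    intro τ
    rw [hv (τ + β), hv τ]
    refine integral_congr fun σ _ => ?_
    rw [show τ + β - σ = (τ - σ) + β by ring, hper]
  -- periodicity of V
  have hVper : Function.Periodic V β := by
    intro τ
    have hA2 : A (τ + β) = Real.exp (β * ε) * A τ := by
      have e0 : A (τ + β) = ∫ σ in τ..(τ + β), g1 σ := by
        rw [hAdef]; norm_num
      have e1 : (∫ σ in (τ - β)..τ, g1 (σ + β)) = ∫ σ in τ..(τ + β), g1 σ := by
        rw [intervalIntegral.integral_comp_add_right g1 β, sub_add_cancel]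
      have e2 : ∀ σ : ℝ, g1 (σ + β) = Real.exp (β * ε) * g1 σ := by
        intro σ
        simp only [hg1def]
        rw [huper σ, show (σ + β) * ε = σ * ε + β * ε by ring, Real.exp_add]
        ring
      rw [e0, ← e1, integral_congr (fun σ _ => e2 σ), intervalIntegral.integral_const_mul, hAdef]
    have hB2 : B (τ + β) = (Real.exp (β * ε))⁻¹ * B τ := by
      have e0 : B (τ + β) = ∫ σ in τ..(τ + β), g2 σ := by
        rw [hBdef]; norm_num
      have e1 : (∫ σ in (τ - β)..τ, g2 (σ + β)) = ∫ σ in τ..(τ + β), g2 σ := by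
        rw [intervalIntegral.integral_comp_add_right g2 β, sub_add_cancel]
      have e2 : ∀ σ : ℝ, g2 (σ + β) = (Real.exp (β * ε))⁻¹ * g2 σ := by
        intro σ
        simp only [hg2def]
        rw [huper σ, show -(σ + β) * ε = -σ * ε + -(β * ε) by ring, Real.exp_add, Real.exp_neg]
        ring
      rw [e0, ← e1, integral_congr (fun σ _ => e2 σ), intervalIntegral.integral_const_mul, hBdef]
    simp only [hVdef]
    rw [hA2, hB2, show -(τ + β) * ε = -(τ * ε + β * ε) by ring, Real.exp_neg, Real.exp_add,
      show (τ + β - β) * ε = τ * ε by ring, ra τ, rb τ]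
    field_simp
  -- v = V on [0, β)
  have hkey : ∀ τ ∈ Set.Ico (0:ℝ) β, v τ = V τ := by
    intro τ hτ
    have hτ0 : (0:ℝ) ≤ τ := hτ.1
    have hτβ : τ < β := hτ.2
    have e1 : (∫ σ in (0:ℝ)..τ, F (τ - σ) * u σ) = ∫ σ in (0:ℝ)..τ, G (τ - σ) * u σ := by
      refine integral_congr fun σ hσ => ?_
      rw [Set.uIcc_of_le hτ0] at hσ
      rw [hFG (τ - σ) ⟨by linarith [hσ.2], by linarith [hσ.1]⟩]
    have e2 : (∫ σ in τ..β, F (τ - σ) * u σ) = ∫ σ in τ..β, G (τ - σ + β) * u σ := by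
      refine integral_congr fun σ hσ => ?_
      rw [Set.uIcc_of_le hτβ.le] at hσ
      rw [← hper (τ - σ), hFG (τ - σ + β) ⟨by linarith [hσ.2], by linarith [hσ.1]⟩]
    have e3 : (∫ σ in τ..β, G (τ - σ + β) * u σ) = ∫ σ in (τ - β)..(0:ℝ), G (τ - σ) * u σ := by
      have e3a : (∫ σ in τ..β, G (τ - σ + β) * u σ)
          = ∫ σ in τ..β, (fun s => G (τ - s) * u s) (σ - β) := by
        refine integral_congr fun σ _ => ?_
        simp only
        rw [show τ - (σ - β) = τ - σ + β by ring, hus σ]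
      rw [e3a, intervalIntegral.integral_comp_sub_right (fun s => G (τ - s) * u s) β,
        sub_self]
    have hicont : ∀ a b : ℝ, IntervalIntegrable (fun σ => G (τ - σ) * u σ) volume a b := by
      intro a b
      exact ((hGc.comp (by fun_prop)).mul hu).intervalIntegrable a b
    have e4 : (∫ σ in (0:ℝ)..τ, G (τ - σ) * u σ) + ∫ σ in (τ - β)..(0:ℝ), G (τ - σ) * u σ
        = ∫ σ in (τ - β)..τ, G (τ - σ) * u σ := by
      rw [add_comm]
      exact integral_add_adjacent_intervals (hicont _ _) (hicont _ _)
    have hiF1 : IntervalIntegrable (fun σ => F (τ - σ) * u σ) volume 0 τ := by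
      refine (((hGc.comp (by fun_prop : Continuous fun σ : ℝ => τ - σ)).mul
        hu).intervalIntegrable 0 τ).congr ?_
      intro σ hσ
      rw [Set.uIoc_of_le hτ0] at hσ
      simp only [Function.comp_apply, Pi.mul_apply]
      rw [hFG (τ - σ) ⟨by linarith [hσ.2], by linarith [hσ.1]⟩]
    have hiF2 : IntervalIntegrable (fun σ => F (τ - σ) * u σ) volume τ β := by
      refine (((hGc.comp (by fun_prop : Continuous fun σ : ℝ => τ - σ + β)).mul
        hu).intervalIntegrable τ β).congr ?_
      intro σ hσ
      rw [Set.uIoc_of_le hτβ.le] at hσ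
      simp only [Function.comp_apply, Pi.mul_apply]
      rw [← hper (τ - σ), hFG (τ - σ + β) ⟨by linarith [hσ.2], by linarith [hσ.1]⟩]
    have e5 : (∫ σ in (0:ℝ)..τ, F (τ - σ) * u σ) + ∫ σ in τ..β, F (τ - σ) * u σ
        = ∫ σ in (0:ℝ)..β, F (τ - σ) * u σ :=
      integral_add_adjacent_intervals hiF1 hiF2
    have e6 : (∫ σ in (τ - β)..τ, G (τ - σ) * u σ) = V τ := by
      have e6a : ∀ σ : ℝ, G (τ - σ) * u σ
          = Real.exp (-τ * ε) * g1 σ * c + Real.exp ((τ - β) * ε) * g2 σ * c := by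
        intro σ
        simp only [hGdef, hg1def, hg2def]
        rw [show -(τ - σ) * ε = -τ * ε + σ * ε by ring,
          show (τ - σ - β) * ε = (τ - β) * ε + -σ * ε by ring, Real.exp_add, Real.exp_add]
        ring
      rw [integral_congr (fun σ _ => e6a σ), intervalIntegral.integral_add
        (f := fun σ => Real.exp (-τ * ε) * g1 σ * c) (g := fun σ => Real.exp ((τ - β) * ε) * g2 σ * c)
        (((continuous_const.mul hg1c).mul continuous_const).intervalIntegrable _ _)
        (((continuous_const.mul hg2c).mul continuous_const).intervalIntegrable _ _)]
      simp only [hVdef]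
      rw [hAdef, hBdef]
      rw [intervalIntegral.integral_mul_const, intervalIntegral.integral_mul_const,
        intervalIntegral.integral_const_mul, intervalIntegral.integral_const_mul]
      ring
    rw [hv τ, ← e5, e1, e2, e3, e4, e6]
  -- v = V everywhere
  have hvV : v = V := by
    funext τ
    have hDper : Function.Periodic (fun t => v t - V t) β := by
      intro t; simp only; rw [hvper t, hVper t]
    obtain ⟨y, hy, hEq⟩ := hDper.exists_mem_Ico₀ hβ τ
    have h0 : v y - V y = 0 := by rw [hkey y hy]; ring
    have : v τ - V τ = 0 := by rw [hEq, h0]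
    linarith
  have hvd : ∀ τ : ℝ, HasDerivAt v (V1 τ) τ := by
    intro τ; rw [hvV]; exact hVder τ
  have hdv : deriv v = V1 := funext fun τ => (hvd τ).deriv
  have hvd2 : ∀ τ : ℝ, HasDerivAt (deriv v) (ε ^ 2 * v τ - u τ) τ := by
    intro τ; rw [hdv, hvV]; exact hV1der τ
  have hvdiff : Differentiable ℝ v := fun τ => (hvd τ).differentiableAt
  have hv1diff : Differentiable ℝ (deriv v) := fun τ => (hvd2 τ).differentiableAt
  have hddv : ∀ τ : ℝ, deriv (deriv v) τ = ε ^ 2 * v τ - u τ := fun τ => (hvd2 τ).deriv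
  refine ⟨?_, hvper, fun τ => by rw [hddv τ]; ring⟩
  rw [show (2 : WithTop ℕ∞) = 1 + 1 from rfl, contDiff_succ_iff_deriv]
  refine ⟨hvdiff, by simp, ?_⟩
  rw [contDiff_one_iff_deriv]
  refine ⟨hv1diff, ?_⟩
  have : deriv (deriv v) = fun τ => ε ^ 2 * v τ - u τ := funext hddv
  rw [this]
  exact ((continuous_const.mul hvdiff.continuous).sub hu)
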